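/- If β is k-positive and (c, r) is a k-addable position for β, then the k-addition β +⁽ᵏ⁾ (c, r) is again k-positive. -/

import Mathlib

/-- `β` is `k`-positive: whenever `β r ≤ β t` for 1-based indices `r ≤ k < t`
(an index `i : Fin n` encodes the 1-based index `i+1`), we have `β s ≥ β r`
for all `r < s ≤ k`. -/
def KPositive {n : ℕ} (k : ℕ) (β : Fin n → ℕ) : Prop :=
  ∀ r t : Fin n, (r : ℕ) + 1 ≤ k → k ≤ (t : ℕ) → β r ≤ β t →
    ∀ s : Fin n, r < s → (s : ℕ) + 1 ≤ k → β r ≤ β s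

/-- `(c, r)` is a `k`-addable position for `β`. -/
def KAddable {n : ℕ} (k : ℕ) (β : Fin n → ℕ) (c : ℕ) (r : Fin n) : Prop :=
  (r : ℕ) + 1 ≤ k ∧ 1 ≤ c ∧ β r < c ∧
  (β r < c - 1 → ∃ t : Fin n, k ≤ (t : ℕ) ∧ β t = c - 1) ∧
  (∀ s : Fin n, r < s → (s : ℕ) + 1 ≤ k → (β s < β r ∨ c ≤ β s))

lemma perm_list_prod_fix {α : Type*} (L : List (Equiv.Perm α)) (i : α)
    (h : ∀ g ∈ L, g i = i) : L.prod i = i := by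
  induction L with
  | nil => simp
  | cons g L ih =>
    simp only [List.prod_cons, Equiv.Perm.mul_apply]
    rw [ih fun g' hg' => h g' (List.mem_cons_of_mem _ hg'),
      h g List.mem_cons_self]

lemma perm_list_prod_mem {α : Type*} (L : List (Equiv.Perm α)) (S : Set α)
    (h : ∀ g ∈ L, ∀ i, g i = i ∨ g i ∈ S) (i : α) :
    L.prod i = i ∨ L.prod i ∈ S := by
  induction L with
  | nil => simp
  | cons g L ih =>
    simp only [List.prod_cons, Equiv.Perm.mul_apply]
    rcases ih (fun g' hg' => h g' (List.mem_cons_of_mem _ hg')) with h1 | h1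
    · rw [h1]; exact h g List.mem_cons_self i
    · rcases h g List.mem_cons_self (L.prod i) with h2 | h2
      · rw [h2]; exact Or.inr h1
      · exact Or.inr h2

/-- If `β` is `k`-positive and `(c, r)` is `k`-addable, then the `k`-addition
`β +⁽ᵏ⁾ (c, r) = t_{r₀,r_q} ⋯ t_{r₀,r₁} β + e_r` (with defining sequence
`r = ρ 0 < ρ 1 < ⋯ < ρ q`, increasing values `β (ρ 0) < ⋯ < β (ρ q) = c − 1`,
and the gap condition) is again `k`-positive. -/
theorem kAddition_kPositive {n k : ℕ} (β : Fin n → ℕ) (c : ℕ) (r : Fin n)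
    (hpos : KPositive k β) (hadd : KAddable k β c r)
    (q : ℕ) (ρ : Fin (q+1) → Fin n)
    (h0 : ρ 0 = r) (hmono : StrictMono ρ)
    (hvals : StrictMono (fun i => β (ρ i)))
    (hlast : β (ρ (Fin.last q)) = c - 1)
    (hgap : ∀ i : Fin q, ∀ s : Fin n, ρ i.castSucc < s → s < ρ i.succ →
      β s ≤ β (ρ i.castSucc) ∨ β (ρ i.succ) < β s)
    (γ : Fin n → ℕ)
    (hγ : γ = fun i =>
      β (((List.ofFn fun j : Fin q => Equiv.swap r (ρ j.succ)).prod) i) +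
        (if i = r then 1 else 0)) :
    KPositive k γ := by
  obtain ⟨hrk, hc1, hrc, hex, hside⟩ := hadd
  clear hex hgap
  set L : List (Equiv.Perm (Fin n)) :=
    List.ofFn fun j : Fin q => Equiv.swap r (ρ j.succ) with hL
  -- indices ρ j for j ≠ 0 are large
  have hlarge : ∀ j : Fin (q+1), j ≠ 0 → k ≤ (ρ j : ℕ) := by
    intro j hj
    by_contra hcon
    push_neg at hcon
    have h1 : β r < β (ρ j) := by
      have := hvals (Fin.pos_of_ne_zero hj)
      simpa [h0] using this
    have h2 : β (ρ j) ≤ c - 1 := by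
      have := hvals.monotone (Fin.le_last j)
      simpa [hlast] using this
    have hrρ : r < ρ j := by
      have := hmono (Fin.pos_of_ne_zero hj); rwa [h0] at this
    have h5 := hside (ρ j) hrρ hcon
    omega
  -- γ on small indices other than r equals β
  have hsmall : ∀ i : Fin n, (i : ℕ) + 1 ≤ k → i ≠ r → γ i = β i := by
    intro i hik hir
    have hfix : L.prod i = i := by
      apply perm_list_prod_fix
      intro g hg
      rw [hL, List.mem_ofFn] at hg
      obtain ⟨j, rfl⟩ := hg
      apply Equiv.swap_apply_of_ne_of_ne hir
      have : (i : ℕ) < (ρ j.succ : ℕ) := by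
        have := hlarge j.succ (Fin.succ_ne_zero j); omega
      exact Fin.ne_of_lt (Fin.lt_def.mpr this)
    simp [hγ, hfix, if_neg hir]
  -- γ r = c
  have hγr : γ r = c := by
    have hprod : L.prod r = ρ (Fin.last q) := by
      cases q with
      | zero => simp [hL, h0]
      | succ m =>
        rw [hL, List.ofFn_succ', List.concat_eq_append, List.prod_append]
        simp only [List.prod_cons, List.prod_nil, mul_one, Equiv.Perm.mul_apply,
          Fin.succ_last, Equiv.swap_apply_left]
        apply perm_list_prod_fix
        intro g hg
        rw [List.mem_ofFn] at hg
        obtain ⟨j, rfl⟩ := hg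
        apply Equiv.swap_apply_of_ne_of_ne
        · have : ρ 0 < ρ (Fin.last (m+1)) := hmono (Fin.pos_of_ne_zero (by
            simp [Fin.ext_iff]))
          rw [h0] at this
          exact (Fin.ne_of_lt this).symm
        · apply hmono.injective.ne
          have : ((j.castSucc.succ : Fin (m+2)) : ℕ) = (j : ℕ) + 1 := by simp
          apply Fin.ne_of_val_ne
          rw [this]
          simp [Fin.last]
          omega
    have : c - 1 + 1 = c := by omega
    simp [hγ, hprod, hlast, this]
  -- key lemma: every large value of γ is dominated by a large value of β
  have hkey : ∀ t : Fin n, k ≤ (t : ℕ) → ∃ u : Fin n, k ≤ (u : ℕ) ∧ γ t ≤ β u := by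
    intro t hkt
    have htr : t ≠ r := by
      intro h; rw [h] at hkt; omega
    have hγt : γ t = β (L.prod t) := by simp [hγ, if_neg htr]
    by_cases hfix : L.prod t = t
    · exact ⟨t, hkt, by rw [hγt, hfix]⟩
    · have hstep : ∀ g ∈ L, ∀ i, g i = i ∨ g i ∈ Set.range ρ := by
        intro g hg i
        rw [hL, List.mem_ofFn] at hg
        obtain ⟨j, rfl⟩ := hg
        by_cases hi1 : i = r
        · right; subst hi1; rw [Equiv.swap_apply_left]; exact ⟨j.succ, rfl⟩
        by_cases hi2 : i = ρ j.succ
        · right; subst hi2; rw [Equiv.swap_apply_right]; exact ⟨0, h0⟩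
        · left; exact Equiv.swap_apply_of_ne_of_ne hi1 hi2
      have hmem : L.prod t ∈ Set.range ρ := by
        rcases perm_list_prod_mem L (Set.range ρ) hstep t with h | h
        · exact absurd h hfix
        · exact h
      obtain ⟨j, hj⟩ := hmem
      have hq : 0 < q := by
        rcases Nat.eq_zero_or_pos q with hq0 | hq0
        · exfalso; apply hfix; subst hq0; simp [hL]
        · exact hq0
      refine ⟨ρ (Fin.last q), hlarge _ (fun h => by rw [Fin.ext_iff] at h; simp at h; omega), ?_⟩
      rw [hγt, ← hj]
      exact hvals.monotone (Fin.le_last j)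
  -- main argument
  intro r' t' hr'k hkt' hle s' hr's' hs'k
  obtain ⟨u, hku, hub⟩ := hkey t' hkt'
  have hle' : γ r' ≤ β u := le_trans hle hub
  by_cases hr' : r' = r
  · subst hr'
    rw [hγr] at hle' ⊢
    have hβr : β r' ≤ β u := by omega
    have hs'β := hpos r' u hr'k hku hβr s' hr's' hs'k
    have h5 := hside s' hr's' hs'k
    have hs'r : s' ≠ r' := ne_of_gt hr's'
    rw [hsmall s' hs'k hs'r]
    omega
  · rw [hsmall r' hr'k hr'] at hle' ⊢
    by_cases hs' : s' = r
    · subst hs'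
      rw [hγr]
      have h1 := hpos r' u hr'k hku hle' s' hr's' hs'k
      omega
    · rw [hsmall s' hs'k hs']
      exact hpos r' u hr'k hku hle' s' hr's' hs'k
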